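/- Let p, q, c, k, l be integers with 0 < p < q, q ≥ 2, c ≥ 2. Then there do not exist integers k, l satisfying simultaneously: 1 + c·k + c/q > 0, b + c·l + (p/q)·c > 0, and 1 + c·k + b + c·l + (p/q)·c < 1, where b is an integer with 0 < b < c. (All inequalities in ℚ.) -/
import Mathlib

/-- Case a=1: no integers k, l satisfy the three flipping inequalities. -/
theorem stmt4 (p q b c : ℤ) (hp : 0 < p) (hpq : p < q) (hgcd : Int.gcd p q = 1)
    (hq : 2 ≤ q) (hb : 0 < b) (hbc : b < c) (hc : 2 ≤ c) :
    ¬ ∃ k l : ℤ,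
      (0 : ℚ) < 1 + c * k + c / q ∧
      (0 : ℚ) < b + c * l + (p / q) * c ∧
      (1 : ℚ) + c * k + b + c * l + (p / q) * c < 1 := by
  rintro ⟨k, l, h1, h2, h3⟩
  have hcQ : (0:ℚ) < c := by exact_mod_cast lt_of_lt_of_le (by norm_num) hc
  have hqQ : (2:ℚ) ≤ q := by exact_mod_cast hq
  have hqpos : (0:ℚ) < q := by linarith
  have hck : (c:ℚ) * k < 0 := by linarith
  have hkneg : (k:ℚ) < 0 := by
    by_contra h
    push_neg at h
    nlinarith
  have hk1 : (k:ℚ) ≤ -1 := by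
    have hk0 : k < 0 := by exact_mod_cast hkneg
    have : k ≤ -1 := by omega
    exact_mod_cast this
  have hckc : (c:ℚ) * k ≤ -c := by nlinarith
  have hdiv : (c:ℚ) / q ≤ c / 2 := by
    apply div_le_div_of_nonneg_left (le_of_lt hcQ) (by norm_num) hqQ
  have hcQ2 : (2:ℚ) ≤ c := by exact_mod_cast hc
  linarith
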